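/- Let d ≥ 2 and let μ_H be the normalized Haar probability measure on the unitary group U(d). Then for all indices i₁ ≠ i₂ and j₁ ≠ j₂ in Fin d, ∫ conj(U_{i₁ j₁}) · conj(U_{i₂ j₂}) · U_{i₁ j₂} · U_{i₂ j₁} dμ_H(U) = − 1/( d (d² − 1) ). -/

import Mathlib

open MeasureTheory Matrix
noncomputable instance unitaryGroupMeasurableSpace {n : Type*} [Fintype n] [DecidableEq n] :
    MeasurableSpace (Matrix.unitaryGroup n ℂ) := borel _

namespace FourthMoment
variable {d : ℕ}

instance {n : Type*} [Fintype n] [DecidableEq n] : BorelSpace (Matrix.unitaryGroup n ℂ) := ⟨rfl⟩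
instance : SecondCountableTopology (Matrix (Fin d) (Fin d) ℂ) :=
  inferInstanceAs (SecondCountableTopology (Fin d → Fin d → ℂ))
instance : SecondCountableTopology (Matrix.unitaryGroup (Fin d) ℂ) :=
  TopologicalSpace.Subtype.secondCountableTopology _

abbrev G (d : ℕ) := Matrix.unitaryGroup (Fin d) ℂ

/-- entry function -/
def u (U : G d) (i j : Fin d) : ℂ := (U : Matrix (Fin d) (Fin d) ℂ) i j

lemma cont_u (i j : Fin d) : Continuous (fun U : G d => u U i j) :=
  (continuous_apply j).comp ((continuous_apply i).comp continuous_subtype_val)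

lemma cont_cu (i j : Fin d) : Continuous (fun U : G d => (starRingEnd ℂ) (u U i j)) :=
  continuous_star.comp (cont_u i j)

lemma sum_conj_mul (U : G d) (a b : Fin d) :
    ∑ k, (starRingEnd ℂ) (u U k a) * u U k b = if a = b then 1 else 0 := by
  have h := Matrix.UnitaryGroup.star_mul_self U
  have h2 := congrFun (congrFun h a) b
  rw [Matrix.mul_apply] at h2
  simp only [Matrix.star_apply, Matrix.one_apply] at h2
  simpa [u, RCLike.star_def] using h2

lemma norm_u_le_one (U : G d) (i j : Fin d) : ‖u U i j‖ ≤ 1 := by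
  have h := sum_conj_mul U j j
  rw [if_pos rfl] at h
  have h' : ∀ k, (starRingEnd ℂ) (u U k j) * u U k j = ((Complex.normSq (u U k j) : ℝ) : ℂ) := by
    intro k; rw [mul_comm, Complex.mul_conj]
  rw [Finset.sum_congr rfl (fun k _ => h' k)] at h
  rw [← Complex.ofReal_sum] at h
  have hr : ∑ k, Complex.normSq (u U k j) = 1 := by exact_mod_cast h
  have hle : Complex.normSq (u U i j) ≤ 1 := by
    rw [← hr]
    exact Finset.single_le_sum (f := fun k => Complex.normSq (u U k j))
      (fun k _ => Complex.normSq_nonneg _) (Finset.mem_univ i)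
  have hn : ‖u U i j‖ ^ 2 ≤ 1 := by
    rw [Complex.sq_norm]; exact hle
  nlinarith [norm_nonneg (u U i j)]

variable (μH : Measure (G d)) [IsProbabilityMeasure μH]

lemma integrable_bdd (f : G d → ℂ) (hf : Continuous f) (C : ℝ) (hC : ∀ U, ‖f U‖ ≤ C) :
    Integrable f μH :=
  Integrable.mono' (integrable_const C) hf.aestronglyMeasurable (Filter.Eventually.of_forall hC)

lemma mul4_le_one {a b c e : ℝ} (ha : 0 ≤ a) (hb : 0 ≤ b) (hc : 0 ≤ c) (he : 0 ≤ e)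
    (ha1 : a ≤ 1) (hb1 : b ≤ 1) (hc1 : c ≤ 1) (he1 : e ≤ 1) : a * b * c * e ≤ 1 :=
  mul_le_one₀ (mul_le_one₀ (mul_le_one₀ ha1 hb hb1) hc hc1) he he1

/-- integrability of a product of two entry-type factors -/
lemma integrable_prod2 (p q : G d → ℂ) (hp : Continuous p) (hq : Continuous q)
    (bp : ∀ U, ‖p U‖ ≤ 1) (bq : ∀ U, ‖q U‖ ≤ 1) :
    Integrable (fun U => p U * q U) μH := by
  refine integrable_bdd μH _ (hp.mul hq) 1 (fun U => ?_)
  rw [norm_mul]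
  exact mul_le_one₀ (bp U) (norm_nonneg _) (bq U)

lemma integrable_prod4 (p q r s : G d → ℂ) (hp : Continuous p) (hq : Continuous q)
    (hr : Continuous r) (hs : Continuous s)
    (bp : ∀ U, ‖p U‖ ≤ 1) (bq : ∀ U, ‖q U‖ ≤ 1) (br : ∀ U, ‖r U‖ ≤ 1) (bs : ∀ U, ‖s U‖ ≤ 1) :
    Integrable (fun U => p U * q U * r U * s U) μH := by
  refine integrable_bdd μH _ (((hp.mul hq).mul hr).mul hs) 1 (fun U => ?_)
  simp only [norm_mul]
  exact mul4_le_one (norm_nonneg _) (norm_nonneg _) (norm_nonneg _) (norm_nonneg _)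
    (bp U) (bq U) (br U) (bs U)

/-- sum over a two-element support -/
lemma sum_two {M : Type*} [AddCommMonoid M] {i₁ i₂ : Fin d} (h : i₁ ≠ i₂) (f : Fin d → M)
    (x y : M) (hf : ∀ k, f k = (if k = i₁ then x else 0) + (if k = i₂ then y else 0)) :
    ∑ k, f k = x + y := by
  rw [Finset.sum_congr rfl (fun k _ => hf k), Finset.sum_add_distrib]
  simp [Finset.sum_ite_eq']

lemma exists_perm {a b a' b' : Fin d} (h : a ≠ b) (h' : a' ≠ b') :
    ∃ σ : Equiv.Perm (Fin d), σ a' = a ∧ σ b' = b := by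
  refine ⟨Equiv.swap (Equiv.swap a' a b') b * Equiv.swap a' a, ?_, ?_⟩
  · have h1 : Equiv.swap a' a b' ≠ a := by
      intro hc
      exact h' ((Equiv.swap a' a).injective (hc.trans (Equiv.swap_apply_left a' a).symm)).symm
    simp only [Equiv.Perm.mul_apply, Equiv.swap_apply_left]
    exact Equiv.swap_apply_of_ne_of_ne (Ne.symm h1) h
  · simp only [Equiv.Perm.mul_apply]
    exact Equiv.swap_apply_left _ _

/-- permutation unitary: row i of (permU σ * U) is row (σ i) of U -/
def permU (σ : Equiv.Perm (Fin d)) : G d :=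
  ⟨Matrix.of fun i k => if σ i = k then 1 else 0, by
    rw [Matrix.mem_unitaryGroup_iff]
    ext a b
    rw [Matrix.mul_apply, Matrix.one_apply]
    simp only [Matrix.star_apply, Matrix.of_apply]
    have key : ∀ k : Fin d, (if σ a = k then (1:ℂ) else 0) * star (if σ b = k then (1:ℂ) else 0)
        = if k = σ a then (if σ b = σ a then 1 else 0) else 0 := by
      intro k
      by_cases h1 : σ a = k
      · subst h1
        simp [apply_ite (star : ℂ → ℂ)]
      · rw [if_neg h1, zero_mul, if_neg (fun hc => h1 hc.symm)]
    rw [Finset.sum_congr rfl (fun k _ => key k), Finset.sum_ite_eq']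
    by_cases hab : a = b
    · simp [hab]
    · have hne : σ b ≠ σ a := fun hc => hab (σ.injective hc).symm
      simp [hab, hne]⟩

lemma permU_entry (σ : Equiv.Perm (Fin d)) (U : G d) (i j : Fin d) :
    u (permU σ * U) i j = u U (σ i) j := by
  show ((permU σ * U : G d) : Matrix (Fin d) (Fin d) ℂ) i j = _
  rw [Matrix.UnitaryGroup.mul_val, Matrix.mul_apply]
  simp only [permU, Matrix.of_apply, ite_mul, one_mul, zero_mul]
  rw [Finset.sum_ite_eq]
  simp [u]

/-- diagonal phase unitary -/
def diagU (i₀ : Fin d) (c : ℂ) (hc : (starRingEnd ℂ) c * c = 1) : G d :=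
  ⟨Matrix.diagonal (fun k => if k = i₀ then c else 1), by
    rw [Matrix.mem_unitaryGroup_iff']
    ext a b
    rw [Matrix.mul_apply, Matrix.one_apply]
    simp only [Matrix.star_apply]
    set v : Fin d → ℂ := fun k => if k = i₀ then c else 1 with hv
    have hvv : ∀ k, (starRingEnd ℂ) (v k) * v k = 1 := by
      intro k
      by_cases h : k = i₀ <;> simp [hv, h, hc]
    have key : ∀ k : Fin d, star (Matrix.diagonal v k a) * Matrix.diagonal v k b
        = if k = a then (if a = b then (starRingEnd ℂ) (v a) * v a else 0) else 0 := by
      intro k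
      by_cases h1 : k = a <;> by_cases h2 : k = b <;>
        simp [Matrix.diagonal_apply, h1, h2, RCLike.star_def] <;> simp_all
    rw [Finset.sum_congr rfl (fun k _ => key k), Finset.sum_ite_eq']
    by_cases hab : a = b <;> simp [hab, hvv]⟩

lemma diagU_entry (i₀ : Fin d) (c : ℂ) (hc : (starRingEnd ℂ) c * c = 1) (U : G d) (i j : Fin d) :
    u (diagU i₀ c hc * U) i j = (if i = i₀ then c else 1) * u U i j := by
  show ((diagU i₀ c hc * U : G d) : Matrix (Fin d) (Fin d) ℂ) i j = _
  rw [Matrix.UnitaryGroup.mul_val]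
  simp [diagU, Matrix.diagonal_mul, u]

lemma sum_single (a : Fin d) (f : Fin d → ℂ) (x : ℂ)
    (hf : ∀ k, f k = if k = a then x else 0) : ∑ k, f k = x := by
  rw [Finset.sum_congr rfl fun k _ => hf k, Finset.sum_ite_eq']
  simp

noncomputable def rC : ℂ := ((Real.sqrt 2)⁻¹ : ℝ)

lemma rC_conj : (starRingEnd ℂ) rC = rC := Complex.conj_ofReal _

lemma rC_star : star rC = rC := rC_conj

lemma rC_sq : rC * rC = 2⁻¹ := by
  rw [rC, ← Complex.ofReal_mul]
  norm_num [← mul_inv, Real.mul_self_sqrt]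

noncomputable def vA (i₁ i₂ : Fin d) : Fin d → ℂ :=
  fun k => if k = i₁ then rC else if k = i₂ then rC else 0
noncomputable def vB (i₁ i₂ : Fin d) : Fin d → ℂ :=
  fun k => if k = i₁ then rC else if k = i₂ then -rC else 0
def vE (a : Fin d) : Fin d → ℂ := fun k => if k = a then 1 else 0

/-- Hadamard-type matrix mixing rows i₁ and i₂. -/
noncomputable def hadM (i₁ i₂ : Fin d) : Matrix (Fin d) (Fin d) ℂ :=
  Matrix.of fun i => if i = i₁ then vA i₁ i₂ else if i = i₂ then vB i₁ i₂ else vE i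

section had
variable {i₁ i₂ : Fin d}

lemma dotAA (h12 : i₁ ≠ i₂) : ∑ k, vA i₁ i₂ k * star (vA i₁ i₂ k) = 1 := by
  have hf : ∀ k, vA i₁ i₂ k * star (vA i₁ i₂ k)
      = (if k = i₁ then rC * rC else 0) + (if k = i₂ then rC * rC else 0) := by
    intro k
    by_cases hk1 : k = i₁ <;> by_cases hk2 : k = i₂ <;> simp_all [vA, rC_star]
  rw [sum_two h12 _ _ _ hf, rC_sq]
  norm_num

lemma dotAB (h12 : i₁ ≠ i₂) : ∑ k, vA i₁ i₂ k * star (vB i₁ i₂ k) = 0 := by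
  have hf : ∀ k, vA i₁ i₂ k * star (vB i₁ i₂ k)
      = (if k = i₁ then rC * rC else 0) + (if k = i₂ then -(rC * rC) else 0) := by
    intro k
    by_cases hk1 : k = i₁ <;> by_cases hk2 : k = i₂ <;> simp_all [vA, vB, rC_star]
  rw [sum_two h12 _ _ _ hf]
  ring

lemma dotBA (h12 : i₁ ≠ i₂) : ∑ k, vB i₁ i₂ k * star (vA i₁ i₂ k) = 0 := by
  have hf : ∀ k, vB i₁ i₂ k * star (vA i₁ i₂ k)
      = (if k = i₁ then rC * rC else 0) + (if k = i₂ then -(rC * rC) else 0) := by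
    intro k
    by_cases hk1 : k = i₁ <;> by_cases hk2 : k = i₂ <;> simp_all [vA, vB, rC_star]
  rw [sum_two h12 _ _ _ hf]
  ring

lemma dotBB (h12 : i₁ ≠ i₂) : ∑ k, vB i₁ i₂ k * star (vB i₁ i₂ k) = 1 := by
  have hf : ∀ k, vB i₁ i₂ k * star (vB i₁ i₂ k)
      = (if k = i₁ then rC * rC else 0) + (if k = i₂ then rC * rC else 0) := by
    intro k
    by_cases hk1 : k = i₁ <;> by_cases hk2 : k = i₂ <;> simp_all [vB, rC_star]
  rw [sum_two h12 _ _ _ hf, rC_sq]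
  norm_num

lemma dotAE {b : Fin d} (hb1 : b ≠ i₁) (hb2 : b ≠ i₂) :
    ∑ k, vA i₁ i₂ k * star (vE b k) = 0 := by
  refine Finset.sum_eq_zero fun k _ => ?_
  by_cases hk1 : k = i₁ <;> by_cases hk2 : k = i₂ <;> by_cases hkb : k = b <;>
    simp_all [vA, vE]

lemma dotBE {b : Fin d} (hb1 : b ≠ i₁) (hb2 : b ≠ i₂) :
    ∑ k, vB i₁ i₂ k * star (vE b k) = 0 := by
  refine Finset.sum_eq_zero fun k _ => ?_
  by_cases hk1 : k = i₁ <;> by_cases hk2 : k = i₂ <;> by_cases hkb : k = b <;>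
    simp_all [vB, vE]

lemma dotEA {a : Fin d} (ha1 : a ≠ i₁) (ha2 : a ≠ i₂) :
    ∑ k, vE a k * star (vA i₁ i₂ k) = 0 := by
  refine Finset.sum_eq_zero fun k _ => ?_
  by_cases hk1 : k = i₁ <;> by_cases hk2 : k = i₂ <;> by_cases hka : k = a <;>
    simp_all [vA, vE]

lemma dotEB {a : Fin d} (ha1 : a ≠ i₁) (ha2 : a ≠ i₂) :
    ∑ k, vE a k * star (vB i₁ i₂ k) = 0 := by
  refine Finset.sum_eq_zero fun k _ => ?_
  by_cases hk1 : k = i₁ <;> by_cases hk2 : k = i₂ <;> by_cases hka : k = a <;>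
    simp_all [vB, vE]

lemma dotEE (a b : Fin d) : ∑ k, vE a k * star (vE b k) = if a = b then 1 else 0 := by
  rcases eq_or_ne a b with rfl | hab
  · rw [if_pos rfl]
    refine sum_single a _ 1 fun k => ?_
    by_cases hk : k = a <;> simp [vE, hk]
  · rw [if_neg hab]
    refine Finset.sum_eq_zero fun k _ => ?_
    by_cases hka : k = a <;> by_cases hkb : k = b <;> simp_all [vE]

lemma hadM_mem (h12 : i₁ ≠ i₂) : hadM i₁ i₂ ∈ Matrix.unitaryGroup (Fin d) ℂ := by
  rw [Matrix.mem_unitaryGroup_iff]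
  ext a b
  rw [Matrix.mul_apply, Matrix.one_apply]
  simp only [Matrix.star_apply, hadM, Matrix.of_apply]
  by_cases ha1 : a = i₁
  · by_cases hb1 : b = i₁
    · simp only [ha1, hb1, eq_self_iff_true, if_true]
      exact dotAA h12
    · by_cases hb2 : b = i₂
      · simp only [ha1, hb2, h12, Ne.symm h12, eq_self_iff_true, if_true, if_false]
        exact dotAB h12
      · simp only [ha1, hb1, hb2, eq_self_iff_true, if_true, if_false]
        rw [if_neg (fun h => hb1 h.symm)]
        exact dotAE (fun h => hb1 h) (fun h => hb2 h)
  · by_cases ha2 : a = i₂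
    · by_cases hb1 : b = i₁
      · simp only [ha2, hb1, Ne.symm h12, eq_self_iff_true, if_true, if_false]
        exact dotBA h12
      · by_cases hb2 : b = i₂
        · simp only [ha2, hb2, Ne.symm h12, eq_self_iff_true, if_true, if_false]
          exact dotBB h12
        · simp only [ha2, hb1, hb2, Ne.symm h12, eq_self_iff_true, if_true, if_false]
          rw [if_neg (fun h => hb2 h.symm)]
          exact dotBE (fun h => hb1 h) (fun h => hb2 h)
    · by_cases hb1 : b = i₁
      · simp only [ha1, ha2, hb1, (fun h => ha1 h : ¬ a = i₁), eq_self_iff_true, if_true, if_false]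
        exact dotEA (fun h => ha1 h) (fun h => ha2 h)
      · by_cases hb2 : b = i₂
        · simp only [ha1, ha2, hb2, Ne.symm h12, eq_self_iff_true, if_true, if_false]
          exact dotEB (fun h => ha1 h) (fun h => ha2 h)
        · simp only [ha1, ha2, hb1, hb2, if_false]
          exact dotEE a b

noncomputable def hadU (h12 : i₁ ≠ i₂) : G d := ⟨hadM i₁ i₂, hadM_mem h12⟩

lemma hadU_entry₁ (h12 : i₁ ≠ i₂) (U : G d) (j : Fin d) :
    u (hadU h12 * U) i₁ j = rC * u U i₁ j + rC * u U i₂ j := by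
  show ((hadU h12 * U : G d) : Matrix (Fin d) (Fin d) ℂ) i₁ j = _
  rw [Matrix.UnitaryGroup.mul_val, Matrix.mul_apply]
  refine sum_two h12 _ _ _ fun k => ?_
  show hadM i₁ i₂ i₁ k * (U : Matrix (Fin d) (Fin d) ℂ) k j = _
  have : hadM i₁ i₂ i₁ k = vA i₁ i₂ k := by simp [hadM]
  rw [this]
  by_cases hk1 : k = i₁ <;> by_cases hk2 : k = i₂ <;> simp_all [vA, u, h12, Ne.symm h12]

lemma hadU_entry₂ (h12 : i₁ ≠ i₂) (U : G d) (j : Fin d) :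
    u (hadU h12 * U) i₂ j = rC * u U i₁ j - rC * u U i₂ j := by
  show ((hadU h12 * U : G d) : Matrix (Fin d) (Fin d) ℂ) i₂ j = _
  rw [Matrix.UnitaryGroup.mul_val, Matrix.mul_apply, sub_eq_add_neg]
  refine sum_two h12 _ _ _ fun k => ?_
  show hadM i₁ i₂ i₂ k * (U : Matrix (Fin d) (Fin d) ℂ) k j = _
  have : hadM i₁ i₂ i₂ k = vB i₁ i₂ k := by simp [hadM, Ne.symm h12]
  rw [this]
  by_cases hk1 : k = i₁ <;> by_cases hk2 : k = i₂ <;>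
    simp_all [vB, u, h12, Ne.symm h12]

end had

section invariance
variable [μH.IsHaarMeasure]

lemma int_left (V : G d) (f : G d → ℂ) : ∫ U, f (V * U) ∂μH = ∫ U, f U ∂μH :=
  integral_mul_left_eq_self f V

lemma int_perm (σ : Equiv.Perm (Fin d)) (f : (Fin d → Fin d → ℂ) → ℂ) :
    ∫ U, f (fun i j => u U (σ i) j) ∂μH = ∫ U, f (u U) ∂μH := by
  rw [← int_left μH (permU σ) (fun U => f (u U))]
  congr 1
  funext U
  congr 1
  funext i j
  exact (permU_entry σ U i j).symm

lemma vanish (i₀ : Fin d) (c : ℂ) (hc : (starRingEnd ℂ) c * c = 1) (f : G d → ℂ)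
    (hf : ∀ U, f (diagU i₀ c hc * U) = -f U) : ∫ U, f U ∂μH = 0 := by
  have h := int_left μH (diagU i₀ c hc) f
  simp_rw [hf] at h
  rw [integral_neg] at h
  exact add_self_eq_zero.mp (by linear_combination -h)

end invariance

lemma sum_split (i₁ : Fin d) (F : Fin d → ℂ) (X : ℂ) (h : ∀ i, i ≠ i₁ → F i = X) :
    ∑ i, F i = F i₁ + ((d : ℂ) - 1) * X := by
  rw [← Finset.add_sum_erase _ _ (Finset.mem_univ i₁)]
  congr 1
  rw [Finset.sum_congr rfl (fun i hi => h i (Finset.ne_of_mem_erase hi)),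
    Finset.sum_const, Finset.card_erase_of_mem (Finset.mem_univ i₁), Finset.card_univ,
    Fintype.card_fin, nsmul_eq_mul]
  congr 1
  have hd : 1 ≤ d := i₁.pos
  push_cast [Nat.cast_sub hd]
  ring

lemma integrable_prod22 (p q r s : G d → ℂ) (hp : Continuous p) (hq : Continuous q)
    (hr : Continuous r) (hs : Continuous s)
    (bp : ∀ U, ‖p U‖ ≤ 1) (bq : ∀ U, ‖q U‖ ≤ 1) (br : ∀ U, ‖r U‖ ≤ 1) (bs : ∀ U, ‖s U‖ ≤ 1) :
    Integrable (fun U => (p U * q U) * (r U * s U)) μH := by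
  refine integrable_bdd μH _ ((hp.mul hq).mul (hr.mul hs)) 1 (fun U => ?_)
  simp only [norm_mul]
  calc ‖p U‖ * ‖q U‖ * (‖r U‖ * ‖s U‖) = ‖p U‖ * ‖q U‖ * ‖r U‖ * ‖s U‖ := by ring
  _ ≤ 1 := mul4_le_one (norm_nonneg _) (norm_nonneg _) (norm_nonneg _) (norm_nonneg _)
      (bp U) (bq U) (br U) (bs U)

lemma norm_cu_le_one (U : G d) (i j : Fin d) : ‖(starRingEnd ℂ) (u U i j)‖ ≤ 1 := by
  rw [RCLike.norm_conj]
  exact norm_u_le_one U i j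

/-- entry-like function: continuous and bounded by 1 -/
def Ent (f : G d → ℂ) : Prop := Continuous f ∧ ∀ U, ‖f U‖ ≤ 1

lemma ent_u (i j : Fin d) : Ent (fun U => u U i j) :=
  ⟨cont_u i j, fun U => norm_u_le_one U i j⟩

lemma ent_cu (i j : Fin d) : Ent (fun U => (starRingEnd ℂ) (u U i j)) :=
  ⟨cont_cu i j, fun U => norm_cu_le_one U i j⟩

lemma integrable2 {p q : G d → ℂ} (hp : Ent p) (hq : Ent q) :
    Integrable (fun U => p U * q U) μH :=
  integrable_prod2 μH p q hp.1 hq.1 hp.2 hq.2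

lemma integrable4 {p q r s : G d → ℂ} (hp : Ent p) (hq : Ent q) (hr : Ent r) (hs : Ent s) :
    Integrable (fun U => p U * q U * r U * s U) μH :=
  integrable_prod4 μH p q r s hp.1 hq.1 hr.1 hs.1 hp.2 hq.2 hr.2 hs.2

lemma integrable22 {p q r s : G d → ℂ} (hp : Ent p) (hq : Ent q) (hr : Ent r) (hs : Ent s) :
    Integrable (fun U => (p U * q U) * (r U * s U)) μH :=
  integrable_prod22 μH p q r s hp.1 hq.1 hr.1 hs.1 hp.2 hq.2 hr.2 hs.2

section relations
variable [μH.IsHaarMeasure] (i₁ i₂ j₁ j₂ : Fin d)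

/-- second moment: d * S = 1 -/
lemma rel_S : (d : ℂ) * ∫ U, (starRingEnd ℂ) (u U i₁ j₂) * u U i₁ j₂ ∂μH = 1 := by
  have hpt : ∀ U : G d, ∑ i, (starRingEnd ℂ) (u U i j₂) * u U i j₂ = 1 := fun U => by
    simpa using sum_conj_mul U j₂ j₂
  have hsum : ∫ U, (∑ i, (starRingEnd ℂ) (u U i j₂) * u U i j₂) ∂μH = 1 := by
    simp_rw [hpt]
    simp
  have hsplit := integral_finset_sum (μ := μH) Finset.univ
    (f := fun i (U : G d) => (starRingEnd ℂ) (u U i j₂) * u U i j₂)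
    (fun i _ => integrable2 μH (ent_cu i j₂) (ent_u i j₂))
  have htrans : ∀ i : Fin d, (∫ U, (starRingEnd ℂ) (u U i j₂) * u U i j₂ ∂μH)
      = ∫ U, (starRingEnd ℂ) (u U i₁ j₂) * u U i₁ j₂ ∂μH := by
    intro i
    have h := int_perm μH (Equiv.swap i₁ i)
      (fun m => (starRingEnd ℂ) (m i₁ j₂) * m i₁ j₂)
    simp only [Equiv.swap_apply_left] at h
    exact h
  calc (d : ℂ) * ∫ U, (starRingEnd ℂ) (u U i₁ j₂) * u U i₁ j₂ ∂μH
      = ∑ i : Fin d, ∫ U, (starRingEnd ℂ) (u U i j₂) * u U i j₂ ∂μH := by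
        rw [Finset.sum_congr rfl (fun i _ => htrans i), Finset.sum_const, Finset.card_univ,
          Fintype.card_fin, nsmul_eq_mul]
    _ = 1 := by rw [← hsplit, hsum]

/-- B + (d-1) E = 0 -/
lemma rel_B_E (hi : i₁ ≠ i₂) (hj : j₁ ≠ j₂) :
    (∫ U, ((starRingEnd ℂ) (u U i₁ j₁) * u U i₁ j₁) *
        ((starRingEnd ℂ) (u U i₁ j₂) * u U i₁ j₂) ∂μH)
      + ((d : ℂ) - 1) * (∫ U, (starRingEnd ℂ) (u U i₁ j₁) * (starRingEnd ℂ) (u U i₂ j₂) *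
          u U i₁ j₂ * u U i₂ j₁ ∂μH) = 0 := by
  have hpt : ∀ U : G d, ∑ i, ((starRingEnd ℂ) (u U i j₂) * u U i j₁) *
      ((starRingEnd ℂ) (u U i₁ j₁) * u U i₁ j₂) = 0 := by
    intro U
    rw [← Finset.sum_mul, sum_conj_mul U j₂ j₁, if_neg (Ne.symm hj), zero_mul]
  have hzero : ∑ i : Fin d, ∫ U, ((starRingEnd ℂ) (u U i j₂) * u U i j₁) *
      ((starRingEnd ℂ) (u U i₁ j₁) * u U i₁ j₂) ∂μH = 0 := by
    rw [← integral_finset_sum _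
      (fun i _ => integrable22 μH (ent_cu i j₂) (ent_u i j₁) (ent_cu i₁ j₁) (ent_u i₁ j₂))]
    simp_rw [hpt]
    simp
  have htrans : ∀ i : Fin d, i ≠ i₁ →
      (∫ U, ((starRingEnd ℂ) (u U i j₂) * u U i j₁) *
        ((starRingEnd ℂ) (u U i₁ j₁) * u U i₁ j₂) ∂μH)
      = ∫ U, (starRingEnd ℂ) (u U i₁ j₁) * (starRingEnd ℂ) (u U i₂ j₂) *
          u U i₁ j₂ * u U i₂ j₁ ∂μH := by
    intro i hii
    obtain ⟨σ, hσ1, hσ2⟩ := exists_perm (a := i₁) (b := i) (a' := i₁) (b' := i₂) (Ne.symm hii) hi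
    have h := int_perm μH σ
      (fun m => ((starRingEnd ℂ) (m i₂ j₂) * m i₂ j₁) * ((starRingEnd ℂ) (m i₁ j₁) * m i₁ j₂))
    simp only [hσ1, hσ2] at h
    rw [h]
    congr 1
    funext U
    ring
  rw [sum_split i₁ _ _ htrans] at hzero
  rw [show (fun U => ((starRingEnd ℂ) (u U i₁ j₂) * u U i₁ j₁) *
      ((starRingEnd ℂ) (u U i₁ j₁) * u U i₁ j₂))
    = (fun U => ((starRingEnd ℂ) (u U i₁ j₁) * u U i₁ j₁) *
      ((starRingEnd ℂ) (u U i₁ j₂) * u U i₁ j₂)) from funext fun U => by ring] at hzero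
  exact hzero

/-- B + (d-1) F = 0 -/
lemma rel_B_F (hi : i₁ ≠ i₂) (hj : j₁ ≠ j₂) :
    (∫ U, ((starRingEnd ℂ) (u U i₁ j₁) * u U i₁ j₁) *
        ((starRingEnd ℂ) (u U i₁ j₂) * u U i₁ j₂) ∂μH)
      + ((d : ℂ) - 1) * (∫ U, u U i₁ j₁ * u U i₂ j₂ *
          (starRingEnd ℂ) (u U i₁ j₂) * (starRingEnd ℂ) (u U i₂ j₁) ∂μH) = 0 := by
  have hpt : ∀ U : G d, ∑ i, ((starRingEnd ℂ) (u U i j₁) * u U i j₂) *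
      (u U i₁ j₁ * (starRingEnd ℂ) (u U i₁ j₂)) = 0 := by
    intro U
    rw [← Finset.sum_mul, sum_conj_mul U j₁ j₂, if_neg hj, zero_mul]
  have hzero : ∑ i : Fin d, ∫ U, ((starRingEnd ℂ) (u U i j₁) * u U i j₂) *
      (u U i₁ j₁ * (starRingEnd ℂ) (u U i₁ j₂)) ∂μH = 0 := by
    rw [← integral_finset_sum _
      (fun i _ => integrable22 μH (ent_cu i j₁) (ent_u i j₂) (ent_u i₁ j₁) (ent_cu i₁ j₂))]
    simp_rw [hpt]
    simp
  have htrans : ∀ i : Fin d, i ≠ i₁ →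
      (∫ U, ((starRingEnd ℂ) (u U i j₁) * u U i j₂) *
        (u U i₁ j₁ * (starRingEnd ℂ) (u U i₁ j₂)) ∂μH)
      = ∫ U, u U i₁ j₁ * u U i₂ j₂ *
          (starRingEnd ℂ) (u U i₁ j₂) * (starRingEnd ℂ) (u U i₂ j₁) ∂μH := by
    intro i hii
    obtain ⟨σ, hσ1, hσ2⟩ := exists_perm (a := i₁) (b := i) (a' := i₁) (b' := i₂) (Ne.symm hii) hi
    have h := int_perm μH σ
      (fun m => ((starRingEnd ℂ) (m i₂ j₁) * m i₂ j₂) * (m i₁ j₁ * (starRingEnd ℂ) (m i₁ j₂)))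
    simp only [hσ1, hσ2] at h
    rw [h]
    congr 1
    funext U
    ring
  rw [sum_split i₁ _ _ htrans] at hzero
  rw [show (fun U => ((starRingEnd ℂ) (u U i₁ j₁) * u U i₁ j₂) *
      (u U i₁ j₁ * (starRingEnd ℂ) (u U i₁ j₂)))
    = (fun U => ((starRingEnd ℂ) (u U i₁ j₁) * u U i₁ j₁) *
      ((starRingEnd ℂ) (u U i₁ j₂) * u U i₁ j₂)) from funext fun U => by ring] at hzero
  exact hzero

/-- B + (d-1) C = S -/
lemma rel_B_C_S (hi : i₁ ≠ i₂) :
    (∫ U, ((starRingEnd ℂ) (u U i₁ j₁) * u U i₁ j₁) *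
        ((starRingEnd ℂ) (u U i₁ j₂) * u U i₁ j₂) ∂μH)
      + ((d : ℂ) - 1) * (∫ U, ((starRingEnd ℂ) (u U i₁ j₁) * u U i₁ j₁) *
          ((starRingEnd ℂ) (u U i₂ j₂) * u U i₂ j₂) ∂μH)
      = ∫ U, (starRingEnd ℂ) (u U i₁ j₂) * u U i₁ j₂ ∂μH := by
  have hpt : ∀ U : G d, ∑ i, ((starRingEnd ℂ) (u U i j₁) * u U i j₁) *
      ((starRingEnd ℂ) (u U i₁ j₂) * u U i₁ j₂)
      = (starRingEnd ℂ) (u U i₁ j₂) * u U i₁ j₂ := by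
    intro U
    rw [← Finset.sum_mul, sum_conj_mul U j₁ j₁, if_pos rfl, one_mul]
  have hzero : ∑ i : Fin d, ∫ U, ((starRingEnd ℂ) (u U i j₁) * u U i j₁) *
      ((starRingEnd ℂ) (u U i₁ j₂) * u U i₁ j₂) ∂μH
      = ∫ U, (starRingEnd ℂ) (u U i₁ j₂) * u U i₁ j₂ ∂μH := by
    rw [← integral_finset_sum _
      (fun i _ => integrable22 μH (ent_cu i j₁) (ent_u i j₁) (ent_cu i₁ j₂) (ent_u i₁ j₂))]
    exact integral_congr_ae (Filter.Eventually.of_forall (fun U => hpt U))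
  have htrans : ∀ i : Fin d, i ≠ i₁ →
      (∫ U, ((starRingEnd ℂ) (u U i j₁) * u U i j₁) *
        ((starRingEnd ℂ) (u U i₁ j₂) * u U i₁ j₂) ∂μH)
      = ∫ U, ((starRingEnd ℂ) (u U i₁ j₁) * u U i₁ j₁) *
          ((starRingEnd ℂ) (u U i₂ j₂) * u U i₂ j₂) ∂μH := by
    intro i hii
    obtain ⟨σ, hσ1, hσ2⟩ := exists_perm (a := i) (b := i₁) (a' := i₁) (b' := i₂) hii hi
    have h := int_perm μH σ
      (fun m => ((starRingEnd ℂ) (m i₁ j₁) * m i₁ j₁) * ((starRingEnd ℂ) (m i₂ j₂) * m i₂ j₂))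
    simp only [hσ1, hσ2] at h
    exact h
  rw [sum_split i₁ _ _ htrans] at hzero
  exact hzero

lemma had_alg (r x y z w cx cy cz cw : ℂ) (hr : r * r = 2⁻¹) :
    ((r * cx + r * cy) * (r * x + r * y)) * ((r * cz - r * cw) * (r * z - r * w)) =
      4⁻¹ * ( (cx * x) * (cz * z) + (cx * x) * (cw * w)
        + -(cx * cw * z * y) + -(x * w * cz * cy)
        + (cy * y) * (cz * z) + (cy * y) * (cw * w)
        + (-(cx * x * (cz * w)) - cx * x * (cw * z) + cx * y * (cz * z) + cx * y * (cw * w)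
            + cy * x * (cz * z) + cy * x * (cw * w) - cy * y * (cz * w) - cy * y * (cw * z))
        + (-(cx * y * (cz * w)) - cy * x * (cw * z)) ) := by
  have h4 : r * r * (r * r) = 4⁻¹ := by rw [hr]; norm_num
  linear_combination ((cx + cy) * (x + y) * ((cz - cw) * (z - w))) * h4

lemma neg_one_phase : (starRingEnd ℂ) (-1 : ℂ) * (-1 : ℂ) = 1 := by simp

lemma I_phase : (starRingEnd ℂ) Complex.I * Complex.I = 1 := by
  simp [Complex.conj_I, Complex.I_mul_I]

/-- Hadamard relation: 2 C = 2 B - E - F -/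
lemma rel_had (hi : i₁ ≠ i₂) :
    (2 : ℂ) * (∫ U, ((starRingEnd ℂ) (u U i₁ j₁) * u U i₁ j₁) *
        ((starRingEnd ℂ) (u U i₂ j₂) * u U i₂ j₂) ∂μH)
    = 2 * (∫ U, ((starRingEnd ℂ) (u U i₁ j₁) * u U i₁ j₁) *
        ((starRingEnd ℂ) (u U i₁ j₂) * u U i₁ j₂) ∂μH)
      - (∫ U, (starRingEnd ℂ) (u U i₁ j₁) * (starRingEnd ℂ) (u U i₂ j₂) *
          u U i₁ j₂ * u U i₂ j₁ ∂μH)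
      - (∫ U, u U i₁ j₁ * u U i₂ j₂ *
          (starRingEnd ℂ) (u U i₁ j₂) * (starRingEnd ℂ) (u U i₂ j₁) ∂μH) := by
  -- names for the sixteen-term expansion pieces
  set T1 : G d → ℂ := fun U => ((starRingEnd ℂ) (u U i₁ j₁) * u U i₁ j₁) *
    ((starRingEnd ℂ) (u U i₁ j₂) * u U i₁ j₂) with hT1
  set T4 : G d → ℂ := fun U => ((starRingEnd ℂ) (u U i₁ j₁) * u U i₁ j₁) *
    ((starRingEnd ℂ) (u U i₂ j₂) * u U i₂ j₂) with hT4
  set T7 : G d → ℂ := fun U => -((starRingEnd ℂ) (u U i₁ j₁) * (starRingEnd ℂ) (u U i₂ j₂) *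
    u U i₁ j₂ * u U i₂ j₁) with hT7
  set T10 : G d → ℂ := fun U => -(u U i₁ j₁ * u U i₂ j₂ *
    (starRingEnd ℂ) (u U i₁ j₂) * (starRingEnd ℂ) (u U i₂ j₁)) with hT10
  set T13 : G d → ℂ := fun U => ((starRingEnd ℂ) (u U i₂ j₁) * u U i₂ j₁) *
    ((starRingEnd ℂ) (u U i₁ j₂) * u U i₁ j₂) with hT13
  set T16 : G d → ℂ := fun U => ((starRingEnd ℂ) (u U i₂ j₁) * u U i₂ j₁) *
    ((starRingEnd ℂ) (u U i₂ j₂) * u U i₂ j₂) with hT16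
  set Va : G d → ℂ := fun U =>
    -((starRingEnd ℂ) (u U i₁ j₁) * u U i₁ j₁ * ((starRingEnd ℂ) (u U i₁ j₂) * u U i₂ j₂))
    - (starRingEnd ℂ) (u U i₁ j₁) * u U i₁ j₁ * ((starRingEnd ℂ) (u U i₂ j₂) * u U i₁ j₂)
    + (starRingEnd ℂ) (u U i₁ j₁) * u U i₂ j₁ * ((starRingEnd ℂ) (u U i₁ j₂) * u U i₁ j₂)
    + (starRingEnd ℂ) (u U i₁ j₁) * u U i₂ j₁ * ((starRingEnd ℂ) (u U i₂ j₂) * u U i₂ j₂)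
    + (starRingEnd ℂ) (u U i₂ j₁) * u U i₁ j₁ * ((starRingEnd ℂ) (u U i₁ j₂) * u U i₁ j₂)
    + (starRingEnd ℂ) (u U i₂ j₁) * u U i₁ j₁ * ((starRingEnd ℂ) (u U i₂ j₂) * u U i₂ j₂)
    - (starRingEnd ℂ) (u U i₂ j₁) * u U i₂ j₁ * ((starRingEnd ℂ) (u U i₁ j₂) * u U i₂ j₂)
    - (starRingEnd ℂ) (u U i₂ j₁) * u U i₂ j₁ * ((starRingEnd ℂ) (u U i₂ j₂) * u U i₁ j₂)
    with hVa
  set Vb : G d → ℂ := fun U =>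
    -((starRingEnd ℂ) (u U i₁ j₁) * u U i₂ j₁ * ((starRingEnd ℂ) (u U i₁ j₂) * u U i₂ j₂))
    - (starRingEnd ℂ) (u U i₂ j₁) * u U i₁ j₁ * ((starRingEnd ℂ) (u U i₂ j₂) * u U i₁ j₂)
    with hVb
  -- pointwise expansion
  have hpt : ∀ U : G d, ((starRingEnd ℂ) (u (hadU hi * U) i₁ j₁) * u (hadU hi * U) i₁ j₁) *
      ((starRingEnd ℂ) (u (hadU hi * U) i₂ j₂) * u (hadU hi * U) i₂ j₂)
      = (4 : ℂ)⁻¹ * (T1 U + T4 U + T7 U + T10 U + T13 U + T16 U + Va U + Vb U) := by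
    intro U
    rw [hadU_entry₁ hi U j₁, hadU_entry₂ hi U j₂]
    simp only [map_add, map_sub, _root_.map_mul, rC_conj, hT1, hT4, hT7, hT10, hT13, hT16, hVa, hVb]
    exact had_alg rC (u U i₁ j₁) (u U i₂ j₁) (u U i₁ j₂) (u U i₂ j₂)
      ((starRingEnd ℂ) (u U i₁ j₁)) ((starRingEnd ℂ) (u U i₂ j₁))
      ((starRingEnd ℂ) (u U i₁ j₂)) ((starRingEnd ℂ) (u U i₂ j₂)) rC_sq
  -- integrability of the pieces
  have IT1 : Integrable T1 μH := by
    rw [hT1]; exact integrable22 μH (ent_cu i₁ j₁) (ent_u i₁ j₁) (ent_cu i₁ j₂) (ent_u i₁ j₂)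
  have IT4 : Integrable T4 μH := by
    rw [hT4]; exact integrable22 μH (ent_cu i₁ j₁) (ent_u i₁ j₁) (ent_cu i₂ j₂) (ent_u i₂ j₂)
  have IT7 : Integrable T7 μH := by
    rw [hT7]
    exact (integrable4 μH (ent_cu i₁ j₁) (ent_cu i₂ j₂) (ent_u i₁ j₂) (ent_u i₂ j₁)).neg
  have IT10 : Integrable T10 μH := by
    rw [hT10]
    exact (integrable4 μH (ent_u i₁ j₁) (ent_u i₂ j₂) (ent_cu i₁ j₂) (ent_cu i₂ j₁)).neg
  have IT13 : Integrable T13 μH := by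
    rw [hT13]; exact integrable22 μH (ent_cu i₂ j₁) (ent_u i₂ j₁) (ent_cu i₁ j₂) (ent_u i₁ j₂)
  have IT16 : Integrable T16 μH := by
    rw [hT16]; exact integrable22 μH (ent_cu i₂ j₁) (ent_u i₂ j₁) (ent_cu i₂ j₂) (ent_u i₂ j₂)
  have IVa : Integrable Va μH := by
    rw [hVa]
    exact (((((((integrable22 μH (ent_cu i₁ j₁) (ent_u i₁ j₁) (ent_cu i₁ j₂) (ent_u i₂ j₂)).neg.sub
      (integrable22 μH (ent_cu i₁ j₁) (ent_u i₁ j₁) (ent_cu i₂ j₂) (ent_u i₁ j₂))).add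
      (integrable22 μH (ent_cu i₁ j₁) (ent_u i₂ j₁) (ent_cu i₁ j₂) (ent_u i₁ j₂))).add
      (integrable22 μH (ent_cu i₁ j₁) (ent_u i₂ j₁) (ent_cu i₂ j₂) (ent_u i₂ j₂))).add
      (integrable22 μH (ent_cu i₂ j₁) (ent_u i₁ j₁) (ent_cu i₁ j₂) (ent_u i₁ j₂))).add
      (integrable22 μH (ent_cu i₂ j₁) (ent_u i₁ j₁) (ent_cu i₂ j₂) (ent_u i₂ j₂))).sub
      (integrable22 μH (ent_cu i₂ j₁) (ent_u i₂ j₁) (ent_cu i₁ j₂) (ent_u i₂ j₂))).sub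
      (integrable22 μH (ent_cu i₂ j₁) (ent_u i₂ j₁) (ent_cu i₂ j₂) (ent_u i₁ j₂))
  have IVb : Integrable Vb μH := by
    rw [hVb]
    exact (integrable22 μH (ent_cu i₁ j₁) (ent_u i₂ j₁) (ent_cu i₁ j₂) (ent_u i₂ j₂)).neg.sub
      (integrable22 μH (ent_cu i₂ j₁) (ent_u i₁ j₁) (ent_cu i₂ j₂) (ent_u i₁ j₂))
  -- vanishing of Va and Vb under diagonal phases
  have hVa0 : ∫ U, Va U ∂μH = 0 := by
    refine vanish μH i₂ (-1) neg_one_phase Va (fun U => ?_)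
    simp only [hVa, diagU_entry, hi, eq_self_iff_true, if_true, if_false, _root_.map_mul,
      map_neg, _root_.map_one, one_mul, neg_mul, mul_neg, neg_neg]
    ring
  have hVb0 : ∫ U, Vb U ∂μH = 0 := by
    refine vanish μH i₂ Complex.I I_phase Vb (fun U => ?_)
    simp only [hVb, diagU_entry, hi, eq_self_iff_true, if_true, if_false, _root_.map_mul,
      Complex.conj_I, one_mul]
    linear_combination (-((starRingEnd ℂ) (u U i₁ j₁) * u U i₂ j₁ *
        ((starRingEnd ℂ) (u U i₁ j₂) * u U i₂ j₂)
      + (starRingEnd ℂ) (u U i₂ j₁) * u U i₁ j₁ *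
        ((starRingEnd ℂ) (u U i₂ j₂) * u U i₁ j₂))) * Complex.I_mul_I
  -- permutation transfers for T13 and T16
  have hT13int : ∫ U, T13 U ∂μH = ∫ U, T4 U ∂μH := by
    have h := int_perm μH (Equiv.swap i₁ i₂) (fun m => ((starRingEnd ℂ) (m i₁ j₁) * m i₁ j₁) *
      ((starRingEnd ℂ) (m i₂ j₂) * m i₂ j₂))
    simp only [Equiv.swap_apply_left, Equiv.swap_apply_right] at h
    simp only [hT13, hT4]
    exact h
  have hT16int : ∫ U, T16 U ∂μH = ∫ U, T1 U ∂μH := by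
    have h := int_perm μH (Equiv.swap i₁ i₂) (fun m => ((starRingEnd ℂ) (m i₁ j₁) * m i₁ j₁) *
      ((starRingEnd ℂ) (m i₁ j₂) * m i₁ j₂))
    simp only [Equiv.swap_apply_left, Equiv.swap_apply_right] at h
    simp only [hT16, hT1]
    exact h
  -- the invariance step
  have hmain : ∫ U, T4 U ∂μH = (4 : ℂ)⁻¹ * ((∫ U, T1 U ∂μH) + (∫ U, T4 U ∂μH)
      + (∫ U, T7 U ∂μH) + (∫ U, T10 U ∂μH) + (∫ U, T13 U ∂μH) + (∫ U, T16 U ∂μH)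
      + (∫ U, Va U ∂μH) + (∫ U, Vb U ∂μH)) := by
    calc ∫ U, T4 U ∂μH = ∫ U, T4 (hadU hi * U) ∂μH := (int_left μH (hadU hi) T4).symm
      _ = ∫ U, (4 : ℂ)⁻¹ * (T1 U + T4 U + T7 U + T10 U + T13 U + T16 U + Va U + Vb U) ∂μH := by
          simp only [hT4]
          exact integral_congr_ae (Filter.Eventually.of_forall hpt)
      _ = (4 : ℂ)⁻¹ * ∫ U, (T1 U + T4 U + T7 U + T10 U + T13 U + T16 U + Va U + Vb U) ∂μH :=
          integral_const_mul _ _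
      _ = _ := by
          have hP2 : Integrable (fun U => T1 U + T4 U) μH := IT1.add IT4
          have hP3 : Integrable (fun U => T1 U + T4 U + T7 U) μH := hP2.add IT7
          have hP4 : Integrable (fun U => T1 U + T4 U + T7 U + T10 U) μH := hP3.add IT10
          have hP5 : Integrable (fun U => T1 U + T4 U + T7 U + T10 U + T13 U) μH := hP4.add IT13
          have hP6 : Integrable (fun U => T1 U + T4 U + T7 U + T10 U + T13 U + T16 U) μH :=
            hP5.add IT16
          have hP7 : Integrable (fun U => T1 U + T4 U + T7 U + T10 U + T13 U + T16 U + Va U) μH :=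
            hP6.add IVa
          rw [integral_add hP7 IVb, integral_add hP6 IVa, integral_add hP5 IT16,
            integral_add hP4 IT13, integral_add hP3 IT10, integral_add hP2 IT7,
            integral_add IT1 IT4]
  -- express ∫T7, ∫T10 as negated integrals
  have hT7int : ∫ U, T7 U ∂μH = -∫ U, (starRingEnd ℂ) (u U i₁ j₁) * (starRingEnd ℂ) (u U i₂ j₂) *
      u U i₁ j₂ * u U i₂ j₁ ∂μH := by
    simp only [hT7]
    exact integral_neg _
  have hT10int : ∫ U, T10 U ∂μH = -∫ U, u U i₁ j₁ * u U i₂ j₂ *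
      (starRingEnd ℂ) (u U i₁ j₂) * (starRingEnd ℂ) (u U i₂ j₁) ∂μH := by
    simp only [hT10]
    exact integral_neg _
  rw [hT13int, hT16int, hVa0, hVb0, hT7int, hT10int] at hmain
  linear_combination 4 * hmain

lemma main (hd : 2 ≤ d) (hi : i₁ ≠ i₂) (hj : j₁ ≠ j₂) :
    ∫ U, (starRingEnd ℂ) (u U i₁ j₁) * (starRingEnd ℂ) (u U i₂ j₂) *
        u U i₁ j₂ * u U i₂ j₁ ∂μH
      = -(1 / ((d : ℂ) * ((d : ℂ) ^ 2 - 1))) := by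
  have e0 := rel_S μH i₁ j₂
  have eB := rel_B_E μH i₁ i₂ j₁ j₂ hi hj
  have eF := rel_B_F μH i₁ i₂ j₁ j₂ hi hj
  have e1 := rel_B_C_S μH i₁ i₂ j₁ j₂ hi
  have eH := rel_had μH i₁ i₂ j₁ j₂ hi
  have hd0 : (d : ℂ) ≠ 0 := Nat.cast_ne_zero.mpr (by omega)
  have hd1 : (d : ℂ) - 1 ≠ 0 := by
    intro h
    have h1 : (d : ℂ) = 1 := by linear_combination h
    have : d = 1 := by exact_mod_cast h1
    omega
  have hd2 : (d : ℂ) + 1 ≠ 0 := by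
    intro h
    have h1 : ((d + 1 : ℕ) : ℂ) = 0 := by push_cast; linear_combination h
    have : d + 1 = 0 := by exact_mod_cast h1
    omega
  have hEF : (∫ U, u U i₁ j₁ * u U i₂ j₂ *
      (starRingEnd ℂ) (u U i₁ j₂) * (starRingEnd ℂ) (u U i₂ j₁) ∂μH)
      = ∫ U, (starRingEnd ℂ) (u U i₁ j₁) * (starRingEnd ℂ) (u U i₂ j₂) *
        u U i₁ j₂ * u U i₂ j₁ ∂μH := by
    have h5 : ((d : ℂ) - 1) * ((∫ U, (starRingEnd ℂ) (u U i₁ j₁) * (starRingEnd ℂ) (u U i₂ j₂) *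
        u U i₁ j₂ * u U i₂ j₁ ∂μH) - (∫ U, u U i₁ j₁ * u U i₂ j₂ *
        (starRingEnd ℂ) (u U i₁ j₂) * (starRingEnd ℂ) (u U i₂ j₁) ∂μH)) = 0 := by
      linear_combination eB - eF
    rcases mul_eq_zero.mp h5 with h | h
    · exact absurd h hd1
    · linear_combination -h
  rw [hEF] at eH
  have hM : (d : ℂ) * ((d : ℂ) ^ 2 - 1) ≠ 0 := by
    refine mul_ne_zero hd0 (fun h => ?_)
    have h2 : ((d : ℂ) - 1) * ((d : ℂ) + 1) = 0 := by linear_combination h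
    rcases mul_eq_zero.mp h2 with h' | h'
    exacts [hd1 h', hd2 h']
  have key : (∫ U, (starRingEnd ℂ) (u U i₁ j₁) * (starRingEnd ℂ) (u U i₂ j₂) *
      u U i₁ j₂ * u U i₂ j₁ ∂μH) * ((d : ℂ) * ((d : ℂ) ^ 2 - 1)) = -1 := by
    linear_combination (-1 : ℂ) * e0 - (d : ℂ) * e1 + ((d : ℂ) * ((d : ℂ) - 1) / 2) * eH
      + (d : ℂ) ^ 2 * eB
  rw [show -(1 / ((d : ℂ) * ((d : ℂ) ^ 2 - 1))) = (-1) / ((d : ℂ) * ((d : ℂ) ^ 2 - 1)) by ring,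
    eq_div_iff hM]
  exact key

end relations

end FourthMoment

/-- **Fourth-moment Haar integral, off-diagonal pairing.** For `d ≥ 2`, indices
`i₁ ≠ i₂`, `j₁ ≠ j₂`,
`∫ conj(U_{i₁ j₁}) conj(U_{i₂ j₂}) U_{i₁ j₂} U_{i₂ j₁} dμ_H(U) = −1/(d(d² − 1))`. -/
theorem fourth_moment_haar_unitary_cross
    (d : ℕ) (hd : 2 ≤ d)
    (μH : Measure (Matrix.unitaryGroup (Fin d) ℂ))
    [μH.IsHaarMeasure] [IsProbabilityMeasure μH]
    (i₁ i₂ j₁ j₂ : Fin d) (hi : i₁ ≠ i₂) (hj : j₁ ≠ j₂) :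
    ∫ U : Matrix.unitaryGroup (Fin d) ℂ,
        (starRingEnd ℂ) ((U : Matrix (Fin d) (Fin d) ℂ) i₁ j₁) *
          (starRingEnd ℂ) ((U : Matrix (Fin d) (Fin d) ℂ) i₂ j₂) *
          (U : Matrix (Fin d) (Fin d) ℂ) i₁ j₂ *
          (U : Matrix (Fin d) (Fin d) ℂ) i₂ j₁ ∂μH
      = -(1 / ((d : ℂ) * ((d : ℂ) ^ 2 - 1))) :=
  FourthMoment.main μH i₁ i₂ j₁ j₂ hd hi hj
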